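/- arXiv:1011.6553 — 2 statements merged into one kernel-verified Lean document; each statement's English description precedes it below -/
import Mathlib

section
/- Let x_k = (1/k)e_k and y_k = e_1 + (1/k)e_k in ℓ¹, and let (z_k) be the interleaved sequence x_1, y_1, x_2, y_2, …. Then every weak* cluster point of (z_k) in (ℓ¹)** belongs to ℓ¹ (so d̂(clust(z_k), ℓ¹) = 0), yet δ_{ℓ¹}(z_k) ≥ 1. -/
open Filter Topology NormedSpace

/-- The set of weak* cluster points in the bidual of a sequence `(x k)` in `X`. -/
def weakStarClusterPoints {X : Type*} [NormedAddCommGroup X] [NormedSpace ℝ X]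
    (x : ℕ → X) : Set (StrongDual ℝ (StrongDual ℝ X)) :=
  {y | MapClusterPt (StrongDual.toWeakDual y) atTop
        fun k => StrongDual.toWeakDual (inclusionInDoubleDual ℝ X (x k))}

/-- `d̂(A, X) = sup_{a ∈ A} dist (a, X)`. -/
noncomputable def dHat {X : Type*} [NormedAddCommGroup X] [NormedSpace ℝ X]
    (A : Set (StrongDual ℝ (StrongDual ℝ X))) : ℝ :=
  sSup ((fun y => Metric.infDist y (Set.range fun v : X => inclusionInDoubleDual ℝ X v)) '' A)

/-- `x_k = (1/k) e_k` in `ℓ¹` (here `0`-indexed: `(1/(k+1)) e_k`). -/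
noncomputable def xSeq : ℕ → lp (fun _ : ℕ => ℝ) 1 := fun k =>
  (1 / (k + 1 : ℝ)) • lp.single 1 k (1 : ℝ)

/-- `y_k = e_1 + (1/k) e_k` in `ℓ¹` (here `0`-indexed: `e_0 + (1/(k+1)) e_k`). -/
noncomputable def ySeq : ℕ → lp (fun _ : ℕ => ℝ) 1 := fun k =>
  lp.single 1 0 (1 : ℝ) + (1 / (k + 1 : ℝ)) • lp.single 1 k (1 : ℝ)

/-- The interleaved sequence `x_1, y_1, x_2, y_2, …`. -/
noncomputable def zSeq : ℕ → lp (fun _ : ℕ => ℝ) 1 := fun k =>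
  if k % 2 = 0 then xSeq (k / 2) else ySeq (k / 2)

noncomputable abbrev E1 : Type := lp (fun _ : ℕ => ℝ) 1

lemma norm_single_one (k : ℕ) : ‖lp.single (E := fun _ : ℕ => ℝ) 1 k (1 : ℝ)‖ = 1 := by
  have h := lp.norm_single (E := fun _ : ℕ => ℝ) (p := 1) (i := k) (x := (1:ℝ))
    (by norm_num)
  simpa using h

lemma norm_J (v : E1) : ‖inclusionInDoubleDual ℝ E1 v‖ = ‖v‖ :=
  (inclusionInDoubleDualLi ℝ (E := E1)).norm_map v

/-- the canonical map into the weak-star bidual -/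
noncomputable def gMap : E1 → WeakDual ℝ (StrongDual ℝ E1) := fun v =>
  StrongDual.toWeakDual (inclusionInDoubleDual ℝ E1 v)

lemma gMap_continuous : Continuous gMap :=
  NormedSpace.Dual.toWeakDual_continuous.comp (inclusionInDoubleDual ℝ E1).continuous

lemma xSeq_tendsto : Tendsto xSeq atTop (𝓝 0) := by
  rw [tendsto_zero_iff_norm_tendsto_zero]
  have h : ∀ k : ℕ, ‖xSeq k‖ = 1 / (k + 1 : ℝ) := by
    intro k
    rw [xSeq, norm_smul, norm_single_one]
    have : (0:ℝ) < 1 / (k + 1 : ℝ) := by positivity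
    rw [Real.norm_eq_abs, abs_of_pos this, mul_one]
  simp only [h]
  exact tendsto_one_div_add_atTop_nhds_zero_nat

lemma ySeq_tendsto : Tendsto ySeq atTop (𝓝 (lp.single 1 0 (1:ℝ))) := by
  have h := (tendsto_const_nhds (x := lp.single (E := fun _ : ℕ => ℝ) 1 0 (1:ℝ))
    (f := (atTop : Filter ℕ))).add xSeq_tendsto
  rw [add_zero] at h
  exact h

lemma zSeq_even (k : ℕ) : zSeq (2 * k) = xSeq k := by
  simp [zSeq, Nat.mul_mod_right, Nat.mul_div_cancel_left]

lemma zSeq_odd (k : ℕ) : zSeq (2 * k + 1) = ySeq k := by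
  have h1 : (2 * k + 1) % 2 = 1 := by omega
  have h2 : (2 * k + 1) / 2 = k := by omega
  simp [zSeq, h1, h2]

lemma tendsto_two_mul : Tendsto (fun k : ℕ => 2 * k) atTop atTop :=
  tendsto_atTop_atTop.mpr fun b => ⟨b, fun a ha => by omega⟩

lemma tendsto_two_mul_add_one : Tendsto (fun k : ℕ => 2 * k + 1) atTop atTop :=
  tendsto_atTop_atTop.mpr fun b => ⟨b, fun a ha => by omega⟩

lemma atTop_le_sup :
    (atTop : Filter ℕ) ≤ map (fun k => 2 * k) atTop ⊔ map (fun k => 2 * k + 1) atTop := by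
  intro s hs
  rw [mem_sup] at hs
  obtain ⟨h1, h2⟩ := hs
  rw [mem_map, mem_atTop_sets] at h1 h2
  obtain ⟨N1, hN1⟩ := h1
  obtain ⟨N2, hN2⟩ := h2
  rw [mem_atTop_sets]
  refine ⟨2 * (N1 + N2), fun n hn => ?_⟩
  rcases Nat.even_or_odd n with ⟨m, hm⟩ | ⟨m, hm⟩
  · have : n = 2 * m := by omega
    rw [this]; exact hN1 m (by omega)
  · have : n = 2 * m + 1 := by omega
    rw [this]; exact hN2 m (by omega)

lemma cluster_eq :
    weakStarClusterPoints zSeq =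
      {0, inclusionInDoubleDual ℝ E1 (lp.single 1 0 (1:ℝ))} := by
  have hgx : Tendsto (gMap ∘ xSeq) atTop (𝓝 (gMap 0)) :=
    (gMap_continuous.tendsto 0).comp xSeq_tendsto
  have hgy : Tendsto (gMap ∘ ySeq) atTop (𝓝 (gMap (lp.single 1 0 (1:ℝ)))) :=
    (gMap_continuous.tendsto _).comp ySeq_tendsto
  ext y
  constructor
  · intro hy
    have hcl : ClusterPt (StrongDual.toWeakDual y) (map (gMap ∘ zSeq) atTop) := hy
    have hle : map (gMap ∘ zSeq) atTop ≤
        map (gMap ∘ xSeq) atTop ⊔ map (gMap ∘ ySeq) atTop := by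
      calc map (gMap ∘ zSeq) atTop
          ≤ map (gMap ∘ zSeq) (map (fun k => 2*k) atTop ⊔ map (fun k => 2*k+1) atTop) :=
            map_mono atTop_le_sup
        _ = map (gMap ∘ zSeq) (map (fun k => 2*k) atTop)
              ⊔ map (gMap ∘ zSeq) (map (fun k => 2*k+1) atTop) := map_sup
        _ = map (gMap ∘ xSeq) atTop ⊔ map (gMap ∘ ySeq) atTop := by
            rw [map_map, map_map]
            have e1 : (gMap ∘ zSeq) ∘ (fun k => 2*k) = gMap ∘ xSeq := by
              funext k
              simp only [Function.comp_apply, zSeq_even]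
            have e2 : (gMap ∘ zSeq) ∘ (fun k => 2*k+1) = gMap ∘ ySeq := by
              funext k
              simp only [Function.comp_apply, zSeq_odd]
            rw [e1, e2]
    have hcl2 : ClusterPt (StrongDual.toWeakDual y)
        (map (gMap ∘ xSeq) atTop ⊔ map (gMap ∘ ySeq) atTop) := hcl.mono hle
    rw [ClusterPt, inf_sup_left, sup_neBot] at hcl2
    rcases hcl2 with h | h
    · left
      have hne : (𝓝 (StrongDual.toWeakDual y) ⊓ 𝓝 (gMap 0)).NeBot :=
        h.mono (inf_le_inf_left _ hgx)
      have := eq_of_nhds_neBot hne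
      have h0 : gMap 0 = StrongDual.toWeakDual (0 : StrongDual ℝ (StrongDual ℝ E1)) := by
        simp [gMap]
      rw [h0] at this
      exact (StrongDual.toWeakDual_inj _ _).mp this
    · right
      have hne : (𝓝 (StrongDual.toWeakDual y) ⊓
          𝓝 (gMap (lp.single 1 0 (1:ℝ)))).NeBot :=
        h.mono (inf_le_inf_left _ hgy)
      have := eq_of_nhds_neBot hne
      exact (StrongDual.toWeakDual_inj _ _).mp this
  · rintro (rfl | rfl)
    · show MapClusterPt _ atTop (gMap ∘ zSeq)
      refine MapClusterPt.of_comp (φ := fun k => 2 * k) tendsto_two_mul ?_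
      have : (gMap ∘ zSeq) ∘ (fun k => 2 * k) = gMap ∘ xSeq := by
        funext k; simp only [Function.comp_apply, zSeq_even]
      rw [this]
      have h0 : StrongDual.toWeakDual (0 : StrongDual ℝ (StrongDual ℝ E1)) = gMap 0 := by
        simp [gMap]
      rw [h0]
      exact hgx.mapClusterPt
    · show MapClusterPt _ atTop (gMap ∘ zSeq)
      refine MapClusterPt.of_comp (φ := fun k => 2 * k + 1) tendsto_two_mul_add_one ?_
      have : (gMap ∘ zSeq) ∘ (fun k => 2 * k + 1) = gMap ∘ ySeq := by
        funext k; simp only [Function.comp_apply, zSeq_odd]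
      rw [this]
      exact hgy.mapClusterPt

/-- Every weak* cluster point of `(z_k)` in `(ℓ¹)**` belongs to (the canonical
image of) `ℓ¹`, so `d̂(clust(z_k), ℓ¹) = 0`, yet `δ_{ℓ¹}(z_k) = diam (clust (z_k)) ≥ 1`. -/
theorem statement6 :
    weakStarClusterPoints zSeq ⊆
      Set.range (fun v : lp (fun _ : ℕ => ℝ) 1 =>
        inclusionInDoubleDual ℝ (lp (fun _ : ℕ => ℝ) 1) v) ∧
    dHat (weakStarClusterPoints zSeq) = 0 ∧
    1 ≤ Metric.diam (weakStarClusterPoints zSeq) := by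
  rw [cluster_eq]
  refine ⟨?_, ?_, ?_⟩
  · rintro y (rfl | rfl)
    · exact ⟨0, by simp⟩
    · exact ⟨lp.single 1 0 (1:ℝ), rfl⟩
  · have h0 : Metric.infDist (0 : StrongDual ℝ (StrongDual ℝ E1))
        (Set.range fun v : E1 => inclusionInDoubleDual ℝ E1 v) = 0 :=
      Metric.infDist_zero_of_mem ⟨0, by simp⟩
    have h1 : Metric.infDist (inclusionInDoubleDual ℝ E1 (lp.single 1 0 (1:ℝ)))
        (Set.range fun v : E1 => inclusionInDoubleDual ℝ E1 v) = 0 :=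
      Metric.infDist_zero_of_mem ⟨_, rfl⟩
    rw [dHat, Set.image_pair, h0, h1]
    simp
  · have hd : Metric.diam ({0, inclusionInDoubleDual ℝ E1 (lp.single 1 0 (1:ℝ))} :
        Set (StrongDual ℝ (StrongDual ℝ E1))) =
        dist (0 : StrongDual ℝ (StrongDual ℝ E1)) (inclusionInDoubleDual ℝ E1 (lp.single 1 0 (1:ℝ))) :=
      Metric.diam_pair
    rw [hd, dist_eq_norm (0 : StrongDual ℝ (StrongDual ℝ E1)), zero_sub (G := StrongDual ℝ (StrongDual ℝ E1)),
      norm_neg (inclusionInDoubleDual ℝ E1 (lp.single 1 0 (1:ℝ))), norm_J, norm_single_one]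
end

section
/- For any bounded sequence (x_k) in a Banach space X, the diameter δ_X(x_k) of the set of weak* cluster points of (x_k) in X** equals sup_{x*∈B_{X*}} (limsup_k x*(x_k) − liminf_k x*(x_k)), and also equals sup_{x*∈B_{X*}} lim_{n→∞} sup{|x*(x_l) − x*(x_j)| : l, j ≥ n}. -/
open Filter Topology NormedSpace

section RealLemmas
variable {u : ℕ → ℝ} {a C : ℝ}

lemma bdd_above_of_abs (h : ∀ k, |u k| ≤ C) : IsBoundedUnder (· ≤ ·) atTop u :=
  isBoundedUnder_of ⟨C, fun k => (abs_le.1 (h k)).2⟩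

lemma bdd_below_of_abs (h : ∀ k, |u k| ≤ C) : IsBoundedUnder (· ≥ ·) atTop u :=
  isBoundedUnder_of ⟨-C, fun k => (abs_le.1 (h k)).1⟩

lemma mapClusterPt_le_limsup (h : MapClusterPt a atTop u)
    (hb : IsBoundedUnder (· ≤ ·) atTop u) : a ≤ limsup u atTop := by
  by_contra hlt
  push_neg at hlt
  obtain ⟨b, h1, h2⟩ := exists_between hlt
  have he := eventually_lt_of_limsup_lt h1 hb
  have hf : ∃ᶠ k in atTop, u k ∈ Set.Ioi b := mapClusterPt_iff_frequently.1 h _ (Ioi_mem_nhds h2)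
  obtain ⟨k, hk1, hk2⟩ := (hf.and_eventually he).exists
  exact absurd hk2 (not_lt.2 hk1.le)

lemma liminf_le_mapClusterPt (h : MapClusterPt a atTop u)
    (hb : IsBoundedUnder (· ≥ ·) atTop u) : liminf u atTop ≤ a := by
  by_contra hlt
  push_neg at hlt
  obtain ⟨b, h1, h2⟩ := exists_between hlt
  have he := eventually_lt_of_lt_liminf h2 hb
  have hf : ∃ᶠ k in atTop, u k ∈ Set.Iio b := mapClusterPt_iff_frequently.1 h _ (Iio_mem_nhds h1)
  obtain ⟨k, hk1, hk2⟩ := (hf.and_eventually he).exists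
  exact absurd hk2 (not_lt.2 hk1.le)

lemma mapClusterPt_limsup_self (h : ∀ k, |u k| ≤ C) :
    MapClusterPt (limsup u atTop) atTop u := by
  rw [Metric.nhds_basis_ball.mapClusterPt_iff_frequently]
  intro ε hε
  have h1 : ∃ᶠ k in atTop, limsup u atTop - ε < u k :=
    frequently_lt_of_lt_limsup ((bdd_below_of_abs h).isCoboundedUnder_le)
      (by linarith)
  have h2 : ∀ᶠ k in atTop, u k < limsup u atTop + ε :=
    eventually_lt_of_limsup_lt (by linarith) (bdd_above_of_abs h)
  refine (h1.and_eventually h2).mono fun k ⟨hk1, hk2⟩ => ?_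
  rw [Metric.mem_ball, Real.dist_eq, abs_sub_lt_iff]
  constructor <;> linarith

lemma mapClusterPt_liminf_self (h : ∀ k, |u k| ≤ C) :
    MapClusterPt (liminf u atTop) atTop u := by
  rw [Metric.nhds_basis_ball.mapClusterPt_iff_frequently]
  intro ε hε
  have h1 : ∃ᶠ k in atTop, u k < liminf u atTop + ε :=
    frequently_lt_of_liminf_lt ((bdd_above_of_abs h).isCoboundedUnder_ge)
      (by linarith)
  have h2 : ∀ᶠ k in atTop, liminf u atTop - ε < u k :=
    eventually_lt_of_lt_liminf (by linarith) (bdd_below_of_abs h)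
  refine (h1.and_eventually h2).mono fun k ⟨hk1, hk2⟩ => ?_
  rw [Metric.mem_ball, Real.dist_eq, abs_sub_lt_iff]
  constructor <;> linarith

lemma osc_eq (h : ∀ k, |u k| ≤ C) :
    (⨅ n : ℕ, sSup {c : ℝ | ∃ l j : ℕ, n ≤ l ∧ n ≤ j ∧ c = |u l - u j|}) =
      limsup u atTop - liminf u atTop := by
  set L := limsup u atTop
  set I := liminf u atTop
  set S : ℕ → Set ℝ := fun n => {c : ℝ | ∃ l j : ℕ, n ≤ l ∧ n ≤ j ∧ c = |u l - u j|}
  have hne : ∀ n, (S n).Nonempty := fun n => ⟨0, n, n, le_rfl, le_rfl, by simp⟩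
  have hbdd : ∀ n, BddAbove (S n) := by
    intro n
    refine ⟨2 * C, fun c hc => ?_⟩
    obtain ⟨l, j, _, _, rfl⟩ := hc
    calc |u l - u j| ≤ |u l| + |u j| := abs_sub _ _
      _ ≤ 2 * C := by have := h l; have := h j; linarith
  have hA0 : ∀ n, (0 : ℝ) ≤ sSup (S n) := fun n =>
    le_csSup (hbdd n) ⟨n, n, le_rfl, le_rfl, by simp⟩
  have hblow : BddBelow (Set.range fun n => sSup (S n)) :=
    ⟨0, by rintro _ ⟨n, rfl⟩; exact hA0 n⟩
  refine le_antisymm ?_ ?_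
  · refine le_of_forall_pos_le_add fun ε hε => ?_
    have h1 : ∀ᶠ k in atTop, u k < L + ε / 2 :=
      eventually_lt_of_limsup_lt (by linarith) (bdd_above_of_abs h)
    have h2 : ∀ᶠ k in atTop, I - ε / 2 < u k :=
      eventually_lt_of_lt_liminf (by linarith) (bdd_below_of_abs h)
    obtain ⟨n, hn⟩ := (h1.and h2).exists_forall_of_atTop
    refine le_trans (ciInf_le hblow n) (csSup_le (hne n) ?_)
    rintro c ⟨l, j, hl, hj, rfl⟩
    obtain ⟨hl1, hl2⟩ := hn l hl
    obtain ⟨hj1, hj2⟩ := hn j hj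
    rw [abs_sub_le_iff]
    constructor <;> linarith
  · refine le_ciInf fun n => le_of_forall_pos_le_add fun ε hε => ?_
    have h1 : ∃ᶠ k in atTop, L - ε / 2 < u k :=
      frequently_lt_of_lt_limsup ((bdd_below_of_abs h).isCoboundedUnder_le) (by linarith)
    have h2 : ∃ᶠ k in atTop, u k < I + ε / 2 :=
      frequently_lt_of_liminf_lt ((bdd_above_of_abs h).isCoboundedUnder_ge) (by linarith)
    obtain ⟨l, hl1, hl2⟩ := (h1.and_eventually (eventually_ge_atTop n)).exists
    obtain ⟨j, hj1, hj2⟩ := (h2.and_eventually (eventually_ge_atTop n)).exists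
    have hmem : |u l - u j| ∈ S n := ⟨l, j, hl2, hj2, rfl⟩
    have := le_csSup (hbdd n) hmem
    have habs : L - I - ε ≤ |u l - u j| := le_trans (by linarith) (le_abs_self _)
    linarith

end RealLemmas


section FAdef
variable {X : Type*} [NormedAddCommGroup X] [NormedSpace ℝ X]


lemma eval_mapClusterPt {x : ℕ → X} {y : StrongDual ℝ (StrongDual ℝ X)}
    (hy : y ∈ weakStarClusterPoints x) (f : StrongDual ℝ X) :
    MapClusterPt (y f) atTop fun k => f (x k) := by
  have heval : Continuous fun g : WeakDual ℝ (StrongDual ℝ X) => g f :=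
    WeakBilin.eval_continuous _ f
  exact hy.continuousAt_comp heval.continuousAt

set_option maxHeartbeats 1000000 in
lemma exists_mem_weakStarClusterPoints {x : ℕ → X} {M : ℝ} (hM : ∀ k, ‖x k‖ ≤ M)
    (f : StrongDual ℝ X) {L : ℝ} (hL : MapClusterPt L atTop fun k => f (x k)) :
    ∃ y ∈ weakStarClusterPoints x, y f = L := by
  set u : ℕ → ℝ := fun k => f (x k) with hu
  set w : ℕ → WeakDual ℝ (StrongDual ℝ X) :=
    fun k => StrongDual.toWeakDual (inclusionInDoubleDual ℝ X (x k)) with hw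
  set F : Filter ℕ := atTop ⊓ comap u (𝓝 L) with hF
  have hmapF : map u F = map u atTop ⊓ 𝓝 L := Filter.push_pull u atTop (𝓝 L)
  have hFne : F.NeBot := by
    rw [← Filter.map_neBot_iff u, hmapF, inf_comm]
    exact hL
  have hK := WeakDual.isCompact_closedBall (𝕜 := ℝ) (0 : StrongDual ℝ (StrongDual ℝ X)) M
  have hsub : ∀ k, w k ∈ WeakDual.toStrongDual ⁻¹' Metric.closedBall 0 M := by
    intro k
    simp only [Set.mem_preimage, Metric.mem_closedBall, dist_zero_right]
    exact le_trans (le_of_eq (dist_zero_right (WeakDual.toStrongDual (w k)))) (le_trans (double_dual_bound ℝ X (x k)) (hM k))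
  have hle : map w F ≤ 𝓟 (WeakDual.toStrongDual ⁻¹' Metric.closedBall 0 M) :=
    le_principal_iff.2 (mem_map.2 (Eventually.of_forall hsub))
  obtain ⟨yw, _, hcl⟩ := hK.exists_clusterPt hle
  refine ⟨WeakDual.toStrongDual yw, ?_, ?_⟩
  · exact hcl.mono (map_mono inf_le_left)
  · have heval : Continuous fun g : WeakDual ℝ (StrongDual ℝ X) => g f :=
      WeakBilin.eval_continuous _ f
    have h2 : MapClusterPt (yw f) F (fun k => (w k) f) :=
      MapClusterPt.continuousAt_comp heval.continuousAt hcl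
    have h3 : ClusterPt (yw f) (map u F) := h2
    have h4 : map u F ≤ 𝓝 L := hmapF ▸ inf_le_right
    exact eq_of_nhds_neBot (h3.mono h4)

lemma norm_le_of_mem_wscp {x : ℕ → X} {M : ℝ} (hM : ∀ k, ‖x k‖ ≤ M) (hM0 : 0 ≤ M)
    {y : StrongDual ℝ (StrongDual ℝ X)} (hy : y ∈ weakStarClusterPoints x) : ‖y‖ ≤ M := by
  refine ContinuousLinearMap.opNorm_le_bound y hM0 fun f => ?_
  have habs : ∀ k, |f (x k)| ≤ ‖f‖ * M := fun k =>
    le_trans (f.le_opNorm (x k)) (by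
      have := hM k
      have := norm_nonneg f
      nlinarith)
  have h1 := mapClusterPt_le_limsup (eval_mapClusterPt hy f) (bdd_above_of_abs habs)
  have h2 := liminf_le_mapClusterPt (eval_mapClusterPt hy f) (bdd_below_of_abs habs)
  have h3 : limsup (fun k => f (x k)) atTop ≤ ‖f‖ * M :=
    limsup_le_of_le ((bdd_below_of_abs habs).isCoboundedUnder_le)
      (Eventually.of_forall fun k => (abs_le.1 (habs k)).2)
  have h4 : -(‖f‖ * M) ≤ liminf (fun k => f (x k)) atTop :=
    le_liminf_of_le ((bdd_above_of_abs habs).isCoboundedUnder_ge)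
      (Eventually.of_forall fun k => (abs_le.1 (habs k)).1)
  rw [Real.norm_eq_abs, abs_le, mul_comm M]
  constructor <;> linarith

end FAdef

set_option maxHeartbeats 1000000 in
/-- For any bounded sequence `(x_k)` in a Banach space `X`, the diameter
`δ_X(x_k)` of the weak* cluster set of `(x_k)` in `X**` equals
`sup_{x* ∈ B_{X*}} (limsup_k x*(x_k) − liminf_k x*(x_k))`, and also equals
`sup_{x* ∈ B_{X*}} lim_n sup {|x*(x_l) − x*(x_j)| : l, j ≥ n}` (the limit of this nonincreasing
sequence of suprema being its infimum over `n`). -/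
theorem statement18 {X : Type*} [NormedAddCommGroup X] [NormedSpace ℝ X] [CompleteSpace X]
    (x : ℕ → X) (hb : ∃ M : ℝ, ∀ k, ‖x k‖ ≤ M) :
    Metric.diam (weakStarClusterPoints x) =
      sSup {d : ℝ | ∃ f : StrongDual ℝ X, ‖f‖ ≤ 1 ∧
        d = Filter.limsup (fun k => f (x k)) atTop - Filter.liminf (fun k => f (x k)) atTop} ∧
    Metric.diam (weakStarClusterPoints x) =
      sSup {d : ℝ | ∃ f : StrongDual ℝ X, ‖f‖ ≤ 1 ∧
        d = ⨅ n : ℕ, sSup {c : ℝ | ∃ l j : ℕ, n ≤ l ∧ n ≤ j ∧ c = |f (x l) - f (x j)|}} := by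
  obtain ⟨M₀, hM₀⟩ := hb
  set M : ℝ := max M₀ 0 with hMdef
  have hM : ∀ k, ‖x k‖ ≤ M := fun k => le_trans (hM₀ k) (le_max_left _ _)
  have hM0 : (0 : ℝ) ≤ M := le_max_right _ _
  have habs : ∀ f : StrongDual ℝ X, ∀ k, |f (x k)| ≤ ‖f‖ * M := fun f k =>
    le_trans (f.le_opNorm (x k)) (by
      have := hM k; have := norm_nonneg f; nlinarith)
  have habs1 : ∀ f : StrongDual ℝ X, ‖f‖ ≤ 1 → ∀ k, |f (x k)| ≤ M := fun f hf k =>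
    le_trans (habs f k) (by nlinarith [norm_nonneg f])
  set D1 : Set ℝ := {d : ℝ | ∃ f : StrongDual ℝ X, ‖f‖ ≤ 1 ∧
      d = Filter.limsup (fun k => f (x k)) atTop - Filter.liminf (fun k => f (x k)) atTop}
    with hD1def
  have h0mem : (0 : ℝ) ∈ D1 := by
    refine ⟨0, by simp, ?_⟩
    simp [limsup_const, liminf_const]
  have hD1ne : D1.Nonempty := ⟨0, h0mem⟩
  have hD1bdd : BddAbove D1 := by
    refine ⟨2 * M, ?_⟩
    rintro d ⟨f, hf, rfl⟩
    have h3 : limsup (fun k => f (x k)) atTop ≤ M :=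
      limsup_le_of_le ((bdd_below_of_abs (habs1 f hf)).isCoboundedUnder_le)
        (Eventually.of_forall fun k => (abs_le.1 (habs1 f hf k)).2)
    have h4 : -M ≤ liminf (fun k => f (x k)) atTop :=
      le_liminf_of_le ((bdd_above_of_abs (habs1 f hf)).isCoboundedUnder_ge)
        (Eventually.of_forall fun k => (abs_le.1 (habs1 f hf k)).1)
    linarith
  have hSb : Bornology.IsBounded (weakStarClusterPoints x) :=
    (Metric.isBounded_closedBall (x := (0 : StrongDual ℝ (StrongDual ℝ X))) (r := M)).subset
      fun y hy => (mem_closedBall_zero_iff (a := y)).2 (norm_le_of_mem_wscp hM hM0 hy)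
  have h0le : (0 : ℝ) ≤ sSup D1 := le_csSup hD1bdd h0mem
  -- cluster values of evaluations lie between liminf and limsup
  have hbetween : ∀ (f : StrongDual ℝ X) (y : StrongDual ℝ (StrongDual ℝ X)), y ∈ weakStarClusterPoints x →
      liminf (fun k => f (x k)) atTop ≤ y f ∧ y f ≤ limsup (fun k => f (x k)) atTop := by
    intro f y hy
    exact ⟨liminf_le_mapClusterPt (eval_mapClusterPt hy f) (bdd_below_of_abs (habs f)),
      mapClusterPt_le_limsup (eval_mapClusterPt hy f) (bdd_above_of_abs (habs f))⟩
  have key : Metric.diam (weakStarClusterPoints x) = sSup D1 := by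
    refine le_antisymm ?_ ?_
    · refine Metric.diam_le_of_forall_dist_le h0le fun y hy z hz => ?_
      rw [dist_eq_norm y z]
      refine ContinuousLinearMap.opNorm_le_bound _ h0le fun f => ?_
      rcases eq_or_ne f 0 with rfl | hf0
      · simp
      · set g : StrongDual ℝ X := ‖f‖⁻¹ • f with hgdef
        have hg1 : ‖g‖ = 1 := norm_smul_inv_norm hf0
        obtain ⟨hy1, hy2⟩ := hbetween g y hy
        obtain ⟨hz1, hz2⟩ := hbetween g z hz
        have hkey : |(y - z) g| ≤ sSup D1 := by
          refine le_trans ?_ (le_csSup hD1bdd ⟨g, hg1.le, rfl⟩)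
          rw [ContinuousLinearMap.sub_apply, abs_le]
          constructor <;> linarith
        have hfg : f = ‖f‖ • g := (smul_inv_smul₀ (norm_ne_zero_iff.2 hf0) f).symm
        calc ‖(y - z) f‖ = ‖f‖ * |(y - z) g| := by
              rw [hfg, map_smul, smul_eq_mul, Real.norm_eq_abs, abs_mul,
                abs_of_nonneg (norm_nonneg f), norm_smul, hg1]
              simp [Real.norm_eq_abs, abs_of_nonneg (norm_nonneg f)]
          _ ≤ sSup D1 * ‖f‖ := by
              rw [mul_comm]
              exact mul_le_mul_of_nonneg_right hkey (norm_nonneg f)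
    · refine csSup_le hD1ne ?_
      rintro d ⟨f, hf, rfl⟩
      obtain ⟨y, hy, hyf⟩ := exists_mem_weakStarClusterPoints hM f
        (mapClusterPt_limsup_self (habs f))
      obtain ⟨z, hz, hzf⟩ := exists_mem_weakStarClusterPoints hM f
        (mapClusterPt_liminf_self (habs f))
      have h1 : limsup (fun k => f (x k)) atTop - liminf (fun k => f (x k)) atTop
          = (y - z) f := by rw [ContinuousLinearMap.sub_apply, hyf, hzf]
      rw [h1]
      calc (y - z) f ≤ ‖(y - z) f‖ := le_abs_self _
        _ ≤ ‖y - z‖ * ‖f‖ := (y - z).le_opNorm f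
        _ ≤ ‖y - z‖ * 1 := by
            exact mul_le_mul_of_nonneg_left hf (norm_nonneg (y - z))
        _ = dist y z := by rw [mul_one, dist_eq_norm y z]
        _ ≤ Metric.diam (weakStarClusterPoints x) := Metric.dist_le_diam_of_mem hSb hy hz
  have hset : {d : ℝ | ∃ f : StrongDual ℝ X, ‖f‖ ≤ 1 ∧
      d = ⨅ n : ℕ, sSup {c : ℝ | ∃ l j : ℕ, n ≤ l ∧ n ≤ j ∧ c = |f (x l) - f (x j)|}} = D1 := by
    ext d
    simp only [hD1def, Set.mem_setOf_eq]
    constructor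
    · rintro ⟨f, hf, rfl⟩
      exact ⟨f, hf, osc_eq (habs1 f hf)⟩
    · rintro ⟨f, hf, rfl⟩
      exact ⟨f, hf, (osc_eq (habs1 f hf)).symm⟩
  exact ⟨key, by rw [hset]; exact key⟩
end
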